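/- Let (E,Σ,μ) be a measure space, let r,s ∈ (1,∞) satisfy r^{-1} + s^{-1} = 1, let u_n, u ∈ L_r(μ) and v_n, v ∈ L_s(μ), suppose u_n → u and v_n → v in measure, and suppose ‖u_n‖_{L_r(μ)} → ‖u‖_{L_r(μ)} and ‖v_n‖_{L_s(μ)} → ‖v‖_{L_s(μ)}. Then ∫_E |u_n v_n − u v| dμ → 0 and ∫_E u_n v_n dμ → ∫_E u v dμ as n → ∞. -/

import Mathlib

open MeasureTheory Filter Topology
open scoped ENNReal NNReal

private lemma rpow_nnnorm_sub_le {a b : ℝ} {r : ℝ} (hr : 0 ≤ r) :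
    (‖a - b‖₊ : ℝ≥0∞) ^ r ≤ 2 ^ r * ((‖a‖₊ : ℝ≥0∞) ^ r + (‖b‖₊ : ℝ≥0∞) ^ r) := by
  have h1 : (‖a - b‖₊ : ℝ≥0∞) ≤ 2 * max (‖a‖₊ : ℝ≥0∞) (‖b‖₊ : ℝ≥0∞) := by
    calc (‖a - b‖₊ : ℝ≥0∞) ≤ (‖a‖₊ : ℝ≥0∞) + (‖b‖₊ : ℝ≥0∞) := by
          exact_mod_cast nnnorm_sub_le a b
      _ ≤ max (‖a‖₊ : ℝ≥0∞) (‖b‖₊ : ℝ≥0∞) + max (‖a‖₊ : ℝ≥0∞) (‖b‖₊ : ℝ≥0∞) :=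
          add_le_add (le_max_left _ _) (le_max_right _ _)
      _ = 2 * max (‖a‖₊ : ℝ≥0∞) (‖b‖₊ : ℝ≥0∞) := (two_mul _).symm
  calc (‖a - b‖₊ : ℝ≥0∞) ^ r ≤ (2 * max (‖a‖₊ : ℝ≥0∞) (‖b‖₊ : ℝ≥0∞)) ^ r :=
        ENNReal.rpow_le_rpow h1 hr
    _ = 2 ^ r * (max (‖a‖₊ : ℝ≥0∞) (‖b‖₊ : ℝ≥0∞)) ^ r := ENNReal.mul_rpow_of_nonneg _ _ hr
    _ ≤ 2 ^ r * ((‖a‖₊ : ℝ≥0∞) ^ r + (‖b‖₊ : ℝ≥0∞) ^ r) := by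
        refine mul_le_mul_right ?_ _
        rcases max_cases ((‖a‖₊ : ℝ≥0∞)) ((‖b‖₊ : ℝ≥0∞)) with ⟨h, _⟩ | ⟨h, _⟩ <;> rw [h]
        · exact le_add_of_nonneg_right zero_le
        · exact le_add_of_nonneg_left zero_le

private lemma keyA {E : Type*} [MeasurableSpace E] (μ : Measure E) {r : ℝ} (hr : 0 < r)
    (f : ℕ → E → ℝ) (f₀ : E → ℝ)
    (hf : ∀ n, AEStronglyMeasurable (f n) μ) (hf₀ : AEStronglyMeasurable f₀ μ)
    (hIfin : ∀ n, ∫⁻ x, (‖f n x‖₊ : ℝ≥0∞) ^ r ∂μ ≠ ∞)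
    (hI₀fin : ∫⁻ x, (‖f₀ x‖₊ : ℝ≥0∞) ^ r ∂μ ≠ ∞)
    (h_ae : ∀ᵐ x ∂μ, Tendsto (fun n => f n x) atTop (𝓝 (f₀ x)))
    (hlim : Tendsto (fun n => ∫⁻ x, (‖f n x‖₊ : ℝ≥0∞) ^ r ∂μ) atTop
      (𝓝 (∫⁻ x, (‖f₀ x‖₊ : ℝ≥0∞) ^ r ∂μ))) :
    Tendsto (fun n => ∫⁻ x, (‖f n x - f₀ x‖₊ : ℝ≥0∞) ^ r ∂μ) atTop (𝓝 0) := by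
  set I : ℕ → ℝ≥0∞ := fun n => ∫⁻ x, (‖f n x‖₊ : ℝ≥0∞) ^ r ∂μ with hI
  set I₀ : ℝ≥0∞ := ∫⁻ x, (‖f₀ x‖₊ : ℝ≥0∞) ^ r ∂μ with hI₀
  set J : ℕ → ℝ≥0∞ := fun n => ∫⁻ x, (‖f n x - f₀ x‖₊ : ℝ≥0∞) ^ r ∂μ with hJ
  set g : ℕ → E → ℝ≥0∞ :=
    fun n x => 2 ^ r * ((‖f n x‖₊ : ℝ≥0∞) ^ r + (‖f₀ x‖₊ : ℝ≥0∞) ^ r) with hg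
  set d : ℕ → E → ℝ≥0∞ := fun n x => (‖f n x - f₀ x‖₊ : ℝ≥0∞) ^ r with hd
  set A : ℕ → ℝ≥0∞ := fun n => 2 ^ r * (I n + I₀) with hA
  have h2r : (2 : ℝ≥0∞) ^ r ≠ ∞ := ENNReal.rpow_ne_top_of_nonneg hr.le (by norm_num)
  have hcont : Continuous fun x : ℝ≥0∞ => x ^ r := ENNReal.continuous_rpow_const
  have hmr : ∀ (h : E → ℝ), AEStronglyMeasurable h μ →
      AEMeasurable (fun x => (‖h x‖₊ : ℝ≥0∞) ^ r) μ := fun h hh =>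
    hcont.measurable.comp_aemeasurable hh.enorm
  have hdmeas : ∀ n, AEMeasurable (d n) μ := fun n => hmr _ ((hf n).sub hf₀)
  have hgmeas : ∀ n, AEMeasurable (g n) μ := fun n =>
    ((hmr _ (hf n)).add (hmr _ hf₀)).const_mul _
  have hdg : ∀ n x, d n x ≤ g n x := fun n x => rpow_nnnorm_sub_le hr.le
  have hgA : ∀ n, ∫⁻ x, g n x ∂μ = A n := fun n => by
    rw [hg, lintegral_const_mul' _ _ h2r, lintegral_add_left' (hmr _ (hf n))]
  have hAfin : ∀ n, A n ≠ ∞ := fun n =>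
    ENNReal.mul_ne_top h2r (ENNReal.add_ne_top.mpr ⟨hIfin n, hI₀fin⟩)
  have hJA : ∀ n, J n ≤ A n := fun n => by
    rw [← hgA n]; exact lintegral_mono fun x => hdg n x
  have hJfin : ∀ n, J n ≠ ∞ := fun n => ((hJA n).trans_lt (hAfin n).lt_top).ne
  set L : ℝ≥0∞ := 2 ^ r * (I₀ + I₀) with hL
  have hLfin : L ≠ ∞ := ENNReal.mul_ne_top h2r (ENNReal.add_ne_top.mpr ⟨hI₀fin, hI₀fin⟩)
  -- A → L
  have hA_tendsto : Tendsto A atTop (𝓝 L) :=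
    ENNReal.Tendsto.const_mul (hlim.add tendsto_const_nhds) (Or.inr h2r)
  -- pointwise limits
  have h_ptwise : ∀ᵐ x ∂μ, Tendsto (fun n => g n x - d n x) atTop
      (𝓝 (2 ^ r * ((‖f₀ x‖₊ : ℝ≥0∞) ^ r + (‖f₀ x‖₊ : ℝ≥0∞) ^ r))) := by
    filter_upwards [h_ae] with x hx
    have hnn : Tendsto (fun n => ((‖f n x‖₊ : ℝ≥0∞)) ) atTop (𝓝 ((‖f₀ x‖₊ : ℝ≥0∞))) := by
      exact (ENNReal.continuous_coe.tendsto _).comp ((continuous_nnnorm.tendsto _).comp hx)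
    have t1 : Tendsto (fun n => (‖f n x‖₊ : ℝ≥0∞) ^ r) atTop (𝓝 ((‖f₀ x‖₊ : ℝ≥0∞) ^ r)) :=
      (hcont.tendsto _).comp hnn
    have t2 : Tendsto (fun n => d n x) atTop (𝓝 0) := by
      have hnn2 : Tendsto (fun n => ((‖f n x - f₀ x‖₊ : ℝ≥0∞))) atTop (𝓝 0) := by
        have : Tendsto (fun n => f n x - f₀ x) atTop (𝓝 (f₀ x - f₀ x)) :=
          hx.sub tendsto_const_nhds
        rw [sub_self] at this
        have := (ENNReal.continuous_coe.tendsto _).comp ((continuous_nnnorm.tendsto _).comp this)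
        simpa [Function.comp_def] using this
      have := (hcont.tendsto 0).comp hnn2
      simpa [Function.comp_def, ENNReal.zero_rpow_of_pos hr] using this
    have tg : Tendsto (fun n => g n x) atTop
        (𝓝 (2 ^ r * ((‖f₀ x‖₊ : ℝ≥0∞) ^ r + (‖f₀ x‖₊ : ℝ≥0∞) ^ r))) :=
      ENNReal.Tendsto.const_mul (t1.add tendsto_const_nhds) (Or.inr h2r)
    simpa using ENNReal.Tendsto.sub tg t2 (Or.inr (by simp))
  -- Fatou
  have hfatou : L ≤ atTop.liminf fun n => A n - J n := by
    have hsub : ∀ n, ∫⁻ x, (g n x - d n x) ∂μ = A n - J n := fun n => by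
      rw [lintegral_sub' (hdmeas n) (hJfin n) (Filter.Eventually.of_forall (hdg n)), hgA n]
    calc L = ∫⁻ x, 2 ^ r * ((‖f₀ x‖₊ : ℝ≥0∞) ^ r + (‖f₀ x‖₊ : ℝ≥0∞) ^ r) ∂μ := by
          rw [hL, lintegral_const_mul' _ _ h2r, lintegral_add_left' (hmr _ hf₀)]
      _ ≤ ∫⁻ x, atTop.liminf (fun n => g n x - d n x) ∂μ := by
          refine lintegral_mono_ae ?_
          filter_upwards [h_ptwise] with x hx
          rw [hx.liminf_eq]
      _ ≤ atTop.liminf fun n => ∫⁻ x, (g n x - d n x) ∂μ :=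
          lintegral_liminf_le' fun n => (hgmeas n).sub (hdmeas n)
      _ = atTop.liminf fun n => A n - J n := by simp_rw [hsub]
  have hAJ_tendsto : Tendsto (fun n => A n - J n) atTop (𝓝 L) := by
    refine tendsto_of_le_liminf_of_limsup_le hfatou ?_
    calc atTop.limsup (fun n => A n - J n) ≤ atTop.limsup A :=
          Filter.limsup_le_limsup (Filter.Eventually.of_forall fun n => tsub_le_self)
      _ = L := hA_tendsto.limsup_eq
  have hJeq : ∀ n, J n = A n - (A n - J n) := fun n =>
    (ENNReal.sub_sub_cancel (hAfin n) (hJA n)).symm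
  have : Tendsto (fun n => A n - (A n - J n)) atTop (𝓝 (L - L)) :=
    ENNReal.Tendsto.sub hA_tendsto hAJ_tendsto (Or.inl hLfin)
  simp_rw [← hJeq, tsub_self] at this
  exact this

private lemma keyB {E : Type*} [MeasurableSpace E] (μ : Measure E) {r : ℝ} (hr : 0 < r)
    (f : ℕ → E → ℝ) (f₀ : E → ℝ)
    (hf : ∀ n, MemLp (f n) (ENNReal.ofReal r) μ) (hf₀ : MemLp f₀ (ENNReal.ofReal r) μ)
    (hmeas : TendstoInMeasure μ f atTop f₀)
    (hnorm : Tendsto (fun n => eLpNorm (f n) (ENNReal.ofReal r) μ) atTop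
      (𝓝 (eLpNorm f₀ (ENNReal.ofReal r) μ))) :
    Tendsto (fun n => eLpNorm (f n - f₀) (ENNReal.ofReal r) μ) atTop (𝓝 0) := by
  have hp0 : ENNReal.ofReal r ≠ 0 := by
    simp [ENNReal.ofReal_eq_zero, not_le, hr]
  have hptop : ENNReal.ofReal r ≠ ∞ := ENNReal.ofReal_ne_top
  have hpt : (ENNReal.ofReal r).toReal = r := ENNReal.toReal_ofReal hr.le
  have heLp : ∀ g : E → ℝ, eLpNorm g (ENNReal.ofReal r) μ =
      (∫⁻ x, (‖g x‖₊ : ℝ≥0∞) ^ r ∂μ) ^ (1 / r) := fun g => by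
    rw [eLpNorm_eq_lintegral_rpow_enorm_toReal hp0 hptop, hpt]
    rfl
  have hIeq : ∀ g : E → ℝ, ∫⁻ x, (‖g x‖₊ : ℝ≥0∞) ^ r ∂μ =
      (eLpNorm g (ENNReal.ofReal r) μ) ^ r := fun g => by
    rw [heLp g, ← ENNReal.rpow_mul, one_div, inv_mul_cancel₀ hr.ne', ENNReal.rpow_one]
  have hIfin : ∀ n, ∫⁻ x, (‖f n x‖₊ : ℝ≥0∞) ^ r ∂μ ≠ ∞ := fun n => by
    rw [hIeq]; exact ENNReal.rpow_ne_top_of_nonneg hr.le (hf n).eLpNorm_ne_top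
  have hI₀fin : ∫⁻ x, (‖f₀ x‖₊ : ℝ≥0∞) ^ r ∂μ ≠ ∞ := by
    rw [hIeq]; exact ENNReal.rpow_ne_top_of_nonneg hr.le hf₀.eLpNorm_ne_top
  have hIlim : Tendsto (fun n => ∫⁻ x, (‖f n x‖₊ : ℝ≥0∞) ^ r ∂μ) atTop
      (𝓝 (∫⁻ x, (‖f₀ x‖₊ : ℝ≥0∞) ^ r ∂μ)) := by
    simp_rw [hIeq]
    exact (ENNReal.continuous_rpow_const.tendsto _).comp hnorm
  have hJ : Tendsto (fun n => ∫⁻ x, (‖f n x - f₀ x‖₊ : ℝ≥0∞) ^ r ∂μ) atTop (𝓝 0) := by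
    refine tendsto_of_subseq_tendsto fun ns hns => ?_
    have hmeas' : TendstoInMeasure μ (fun i => f (ns i)) atTop f₀ :=
      fun ε hε => (hmeas ε hε).comp hns
    obtain ⟨ms, hms, h_ae⟩ := hmeas'.exists_seq_tendsto_ae
    refine ⟨ms, ?_⟩
    have hcomp : Tendsto (fun i => ns (ms i)) atTop atTop := hns.comp hms.tendsto_atTop
    exact keyA μ hr (fun i => f (ns (ms i))) f₀ (fun i => (hf _).1) hf₀.1
      (fun i => hIfin _) hI₀fin h_ae (hIlim.comp hcomp)
  have := ((ENNReal.continuous_rpow_const (y := 1/r)).tendsto (0 : ℝ≥0∞)).comp hJ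
  simp only [Function.comp_def] at this
  have h0 : ((0 : ℝ≥0∞)) ^ (1 / r) = 0 := ENNReal.zero_rpow_of_pos (by positivity)
  rw [h0] at this
  convert this using 2 with n
  rw [heLp]
  rfl

/-- If `uₙ → u` in `L_r`-norm sense (norms converge) and in measure, and
`vₙ → v` likewise in `L_s` with `1/r + 1/s = 1`, then `∫ |uₙ vₙ − u v| dμ → 0` and
`∫ uₙ vₙ dμ → ∫ u v dμ`. -/
theorem integral_product_tendsto_of_tendstoInMeasure
    {E : Type*} [MeasurableSpace E] (μ : Measure E) (r s : ℝ)
    (hr : 1 < r) (hs : 1 < s) (hrs : r⁻¹ + s⁻¹ = 1)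
    (u : ℕ → E → ℝ) (u₀ : E → ℝ) (v : ℕ → E → ℝ) (v₀ : E → ℝ)
    (hu : ∀ n, MemLp (u n) (ENNReal.ofReal r) μ)
    (hu₀ : MemLp u₀ (ENNReal.ofReal r) μ)
    (hv : ∀ n, MemLp (v n) (ENNReal.ofReal s) μ)
    (hv₀ : MemLp v₀ (ENNReal.ofReal s) μ)
    (humeas : TendstoInMeasure μ u atTop u₀)
    (hvmeas : TendstoInMeasure μ v atTop v₀)
    (hunorm : Tendsto (fun n => eLpNorm (u n) (ENNReal.ofReal r) μ) atTop
      (𝓝 (eLpNorm u₀ (ENNReal.ofReal r) μ)))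
    (hvnorm : Tendsto (fun n => eLpNorm (v n) (ENNReal.ofReal s) μ) atTop
      (𝓝 (eLpNorm v₀ (ENNReal.ofReal s) μ))) :
    Tendsto (fun n => ∫ x, |u n x * v n x - u₀ x * v₀ x| ∂μ) atTop (𝓝 0) ∧
    Tendsto (fun n => ∫ x, u n x * v n x ∂μ) atTop (𝓝 (∫ x, u₀ x * v₀ x ∂μ)) := by
  have hr0 : (0:ℝ) < r := by linarith
  have hs0 : (0:ℝ) < s := by linarith
  set p := ENNReal.ofReal r with hp
  set q := ENNReal.ofReal s with hq
  have hpq : (1 : ℝ≥0∞) / 1 = 1 / p + 1 / q := by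
    rw [hp, hq, one_div, one_div, one_div,
      ← ENNReal.ofReal_inv_of_pos hr0, ← ENNReal.ofReal_inv_of_pos hs0,
      ← ENNReal.ofReal_add (by positivity) (by positivity), hrs, ENNReal.ofReal_one, inv_one]
  haveI : ENNReal.HolderTriple p q 1 := ⟨by simpa [one_div] using hpq.symm⟩
  have hu' := keyB μ hr0 u u₀ hu hu₀ humeas hunorm
  have hv' := keyB μ hs0 v v₀ hv hv₀ hvmeas hvnorm
  -- integrability of products
  have hint : ∀ n, Integrable (fun x => u n x * v n x) μ := fun n =>
    memLp_one_iff_integrable.mp ((hv n).smul (hu n))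
  have hint₀ : Integrable (fun x => u₀ x * v₀ x) μ :=
    memLp_one_iff_integrable.mp (hv₀.smul hu₀)
  have hbound : ∀ n, eLpNorm (fun x => u n x * v n x - u₀ x * v₀ x) 1 μ ≤
      eLpNorm (u n - u₀) p μ * eLpNorm (v n) q μ +
      eLpNorm u₀ p μ * eLpNorm (v n - v₀) q μ := fun n => by
    have heq : (fun x => u n x * v n x - u₀ x * v₀ x) =
        (fun x => (u n x - u₀ x) * v n x) + fun x => u₀ x * (v n x - v₀ x) := by
      funext x
      simp only [Pi.add_apply]
      ring
    rw [heq]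
    refine (eLpNorm_add_le (((hu n).1.sub hu₀.1).mul (hv n).1)
      (hu₀.1.mul ((hv n).1.sub hv₀.1)) le_rfl).trans (add_le_add ?_ ?_)
    · have h := eLpNorm_le_eLpNorm_mul_eLpNorm_of_nnnorm (p := p) (q := q) (r := 1)
        ((hu n).1.sub hu₀.1) (hv n).1 (· * ·) 1
        (Filter.Eventually.of_forall fun x => by simp [nnnorm_mul])
      simp only [ENNReal.coe_one, one_mul] at h
      exact h
    · have h := eLpNorm_le_eLpNorm_mul_eLpNorm_of_nnnorm (p := p) (q := q) (r := 1)
        hu₀.1 ((hv n).1.sub hv₀.1) (· * ·) 1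
        (Filter.Eventually.of_forall fun x => by simp [nnnorm_mul])
      simp only [ENNReal.coe_one, one_mul] at h
      exact h
  have hRHS : Tendsto (fun n => eLpNorm (u n - u₀) p μ * eLpNorm (v n) q μ +
      eLpNorm u₀ p μ * eLpNorm (v n - v₀) q μ) atTop (𝓝 0) := by
    have t1 : Tendsto (fun n => eLpNorm (u n - u₀) p μ * eLpNorm (v n) q μ) atTop
        (𝓝 (0 * eLpNorm v₀ q μ)) :=
      ENNReal.Tendsto.mul hu' (Or.inr hv₀.eLpNorm_ne_top) hvnorm (Or.inr (by simp))
    have t2 : Tendsto (fun n => eLpNorm u₀ p μ * eLpNorm (v n - v₀) q μ) atTop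
        (𝓝 (eLpNorm u₀ p μ * 0)) :=
      ENNReal.Tendsto.const_mul hv' (Or.inr hu₀.eLpNorm_ne_top)
    simpa using t1.add t2
  have hsnorm : Tendsto (fun n => eLpNorm (fun x => u n x * v n x - u₀ x * v₀ x) 1 μ)
      atTop (𝓝 0) :=
    tendsto_of_tendsto_of_tendsto_of_le_of_le tendsto_const_nhds hRHS
      (fun n => zero_le) hbound
  have habs : ∀ n, ∫ x, |u n x * v n x - u₀ x * v₀ x| ∂μ =
      (eLpNorm (fun x => u n x * v n x - u₀ x * v₀ x) 1 μ).toReal := fun n => by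
    have hw : Integrable (fun x => u n x * v n x - u₀ x * v₀ x) μ := (hint n).sub hint₀
    rw [eLpNorm_one_eq_lintegral_enorm, ← integral_norm_eq_lintegral_enorm hw.1]
    simp [Real.norm_eq_abs]
  have goal1 : Tendsto (fun n => ∫ x, |u n x * v n x - u₀ x * v₀ x| ∂μ) atTop (𝓝 0) := by
    simp_rw [habs]
    have := (ENNReal.tendsto_toReal (show (0:ℝ≥0∞) ≠ ∞ by simp)).comp hsnorm
    simpa [Function.comp_def] using this
  have key2 : Tendsto (fun n => ∫ x, u n x * v n x ∂μ - ∫ x, u₀ x * v₀ x ∂μ) atTop (𝓝 0) := by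
    refine squeeze_zero_norm (fun n => ?_) goal1
    rw [← integral_sub (hint n) hint₀]
    calc ‖∫ x, (u n x * v n x - u₀ x * v₀ x) ∂μ‖
        ≤ ∫ x, ‖u n x * v n x - u₀ x * v₀ x‖ ∂μ := norm_integral_le_integral_norm _
      _ = ∫ x, |u n x * v n x - u₀ x * v₀ x| ∂μ := by simp [Real.norm_eq_abs]
  exact ⟨goal1, tendsto_sub_nhds_zero_iff.mp key2⟩
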